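/- Let B be a real symmetric projection, B^⊥ = I − B, and R real symmetric with R² = I. A complex number ω ∉ {−1, 0, 1} is an eigenvalue of BRB if and only if ω is an eigenvalue of −B^⊥RB^⊥. -/
import Mathlib


open Matrix

lemma mem_spec_iff_aux {n : ℕ} (M : Matrix (Fin n) (Fin n) ℂ) (ω : ℂ) :
    ω ∈ spectrum ℂ M ↔ ∃ v : Fin n → ℂ, v ≠ 0 ∧ M *ᵥ v = ω • v := by
  rw [spectrum.mem_iff, Matrix.isUnit_iff_isUnit_det, isUnit_iff_ne_zero, not_not,
    ← Matrix.exists_mulVec_eq_zero_iff]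
  constructor
  · rintro ⟨v, hv, hMv⟩
    refine ⟨v, hv, ?_⟩
    rw [Algebra.algebraMap_eq_smul_one, sub_mulVec, smul_mulVec, one_mulVec,
      sub_eq_zero] at hMv
    exact hMv.symm
  · rintro ⟨v, hv, hMv⟩
    refine ⟨v, hv, ?_⟩
    rw [Algebra.algebraMap_eq_smul_one, sub_mulVec, smul_mulVec, one_mulVec, hMv, sub_self]

lemma eig_step_aux {n : ℕ} (P S : Matrix (Fin n) (Fin n) ℂ)
    (hP : P * P = P) (hS : S * S = 1) (ω : ℂ) (hω0 : ω ≠ 0) (hω1 : ω * ω ≠ 1)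
    (v : Fin n → ℂ) (hv : v ≠ 0) (h : (P * S * P) *ᵥ v = ω • v) :
    ∃ u : Fin n → ℂ, u ≠ 0 ∧ ((1 - P) * S * (1 - P)) *ᵥ u = (-ω) • u := by
  have hQ : (1 - P) * (1 - P) = 1 - P := by
    rw [sub_mul, one_mul, mul_sub, mul_one, hP, sub_self, sub_zero]
  have hPv : P *ᵥ v = v := by
    have h1 : (P * S * P) *ᵥ v = ω • (P *ᵥ v) := by
      calc (P * S * P) *ᵥ v = P *ᵥ ((P * S * P) *ᵥ v) := by
            rw [mulVec_mulVec, ← mul_assoc, ← mul_assoc, hP]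
        _ = P *ᵥ (ω • v) := by rw [h]
        _ = ω • (P *ᵥ v) := by rw [mulVec_smul]
    exact smul_right_injective _ hω0 (h1.symm.trans h)
  have hPSv : (P * S) *ᵥ v = ω • v := by
    have h2 : (P * S) *ᵥ (P *ᵥ v) = ω • v := by rw [mulVec_mulVec]; exact h
    rwa [hPv] at h2
  refine ⟨((1 - P) * S) *ᵥ v, ?_, ?_⟩
  · intro h0
    rw [sub_mul, one_mul, sub_mulVec, sub_eq_zero] at h0
    have hSv : S *ᵥ v = ω • v := by rw [h0, hPSv]
    have hv2 : v = (ω * ω) • v := by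
      have h3 : S *ᵥ (S *ᵥ v) = v := by rw [mulVec_mulVec, hS, one_mulVec]
      rw [hSv, mulVec_smul, hSv, smul_smul] at h3
      exact h3.symm
    have h4 : (ω * ω - 1) • v = 0 := by
      rw [sub_smul, one_smul, ← hv2, sub_self]
    rcases smul_eq_zero.mp h4 with h' | h'
    · exact hω1 (sub_eq_zero.mp h')
    · exact hv h'
  · have e1 : ((1 - P) * S) *ᵥ v = S *ᵥ v - (P * S) *ᵥ v := by
      rw [sub_mul, one_mul, sub_mulVec]
    have e3 : (1 - P) *ᵥ (((1 - P) * S) *ᵥ v) = ((1 - P) * S) *ᵥ v := by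
      rw [mulVec_mulVec, ← mul_assoc, hQ]
    have e4 : S *ᵥ (((1 - P) * S) *ᵥ v) = v - ω • (S *ᵥ v) := by
      rw [e1, mulVec_sub, mulVec_mulVec, hS, one_mulVec, hPSv, mulVec_smul]
    have e5 : (1 - P) *ᵥ v = 0 := by rw [sub_mulVec, one_mulVec, hPv, sub_self]
    have m1 : (1 - P) * S * (1 - P) * ((1 - P) * S) = (1 - P) * S * ((1 - P) * S) := by
      rw [mul_assoc ((1 - P) * S) (1 - P) ((1 - P) * S),
        ← mul_assoc (1 - P) (1 - P) S, hQ]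
    have step : ((1 - P) * S * (1 - P)) *ᵥ (((1 - P) * S) *ᵥ v)
        = ((1 - P) * S) *ᵥ (((1 - P) * S) *ᵥ v) := by
      conv_lhs => rw [mulVec_mulVec, m1, ← mulVec_mulVec]
    rw [step, ← mulVec_mulVec, e4, mulVec_sub, mulVec_smul, e5, mulVec_mulVec,
      zero_sub, neg_smul]

/-- ω ∉ {−1,0,1} is an eigenvalue of BRB iff it is an eigenvalue of −B^⊥RB^⊥. -/
theorem stmt8 {n : ℕ} (B R : Matrix (Fin n) (Fin n) ℝ)
    (hBs : Bᵀ = B) (hB2 : B * B = B) (hRs : Rᵀ = R) (hR2 : R * R = 1)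
    (ω : ℂ) (hω : ω ∉ ({-1, 0, 1} : Set ℂ)) :
    ω ∈ spectrum ℂ ((B * R * B).map Complex.ofReal) ↔
    ω ∈ spectrum ℂ ((-((1 - B) * R * (1 - B))).map Complex.ofReal) := by
  simp only [Set.mem_insert_iff, Set.mem_singleton_iff, not_or] at hω
  obtain ⟨hωn1, hω0, hω1⟩ := hω
  have hωsq : ω * ω ≠ 1 := by
    intro hsq
    rcases mul_self_eq_one_iff.mp hsq with h' | h'
    · exact hω1 h'
    · exact hωn1 h'
  set f : Matrix (Fin n) (Fin n) ℝ →+* Matrix (Fin n) (Fin n) ℂ := Complex.ofRealHom.mapMatrix with hf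
  set P := B.map Complex.ofReal with hPdef
  set S := R.map Complex.ofReal with hSdef
  have hPf : P = f B := rfl
  have hSf : S = f R := rfl
  have hP : P * P = P := by rw [hPf, ← _root_.map_mul, hB2]
  have hS : S * S = 1 := by rw [hSf, ← _root_.map_mul, hR2, _root_.map_one]
  have hQ : (1 - P) * (1 - P) = 1 - P := by
    rw [sub_mul, one_mul, mul_sub, mul_one, hP, sub_self, sub_zero]
  have h1 : (B * R * B).map Complex.ofReal = P * S * P := by
    show f (B * R * B) = P * S * P
    rw [_root_.map_mul, _root_.map_mul, hPf, hSf]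
  have h2 : (-((1 - B) * R * (1 - B))).map Complex.ofReal = -((1 - P) * S * (1 - P)) := by
    show f (-((1 - B) * R * (1 - B))) = _
    rw [_root_.map_neg, _root_.map_mul, _root_.map_mul, _root_.map_sub, _root_.map_one, hPf, hSf]
  rw [h1, h2, mem_spec_iff_aux, mem_spec_iff_aux]
  constructor
  · rintro ⟨v, hv, hMv⟩
    obtain ⟨u, hu, hMu⟩ := eig_step_aux P S hP hS ω hω0 hωsq v hv hMv
    refine ⟨u, hu, ?_⟩
    rw [neg_mulVec, hMu, neg_smul, neg_neg]
  · rintro ⟨v, hv, hMv⟩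
    rw [neg_mulVec, neg_eq_iff_eq_neg, ← neg_smul] at hMv
    have hωn0 : -ω ≠ 0 := neg_ne_zero.mpr hω0
    have hωnsq : (-ω) * (-ω) ≠ 1 := by rwa [neg_mul_neg]
    obtain ⟨u, hu, hMu⟩ := eig_step_aux (1 - P) S hQ hS (-ω) hωn0 hωnsq v hv hMv
    refine ⟨u, hu, ?_⟩
    rw [sub_sub_cancel] at hMu
    rwa [neg_neg] at hMu
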